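/- Let (R,G) be a left e-faithful graded ring (where e is the identity of G). The relation I ∼ J defined by I ∩ R_e = J ∩ R_e is an equivalence relation on the vertices of Gr_G(R), and the quotient graph of Gr_G(R) by ∼ is isomorphic to the intersection graph G(R_e) of left ideals of the subring R_e, via the map sending a left ideal I_e of R_e to the class of the graded left ideal R·I_e. -/

import Mathlib

variable {G R : Type*} [AddGroup G] [DecidableEq G] [Ring R]

/-- The set of proper nontrivial `G`-graded left ideals of `R`. -/
def hV (𝒜 : G → AddSubgroup R) [GradedRing 𝒜] : Set (Ideal R) :=
  {I | I ≠ ⊥ ∧ I ≠ ⊤ ∧ Ideal.IsHomogeneous 𝒜 I}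

/-- The intersection graph on a set of (left) ideals: two distinct ideals are
adjacent iff their intersection is nonzero. -/
def interGraph (V : Set (Ideal R)) : SimpleGraph V where
  Adj I J := I ≠ J ∧ (I : Ideal R) ⊓ (J : Ideal R) ≠ ⊥
  symm := ⟨fun I J ⟨h1, h2⟩ => ⟨h1.symm, by rwa [inf_comm] at h2⟩⟩
  loopless := ⟨fun I ⟨h1, _⟩ => h1 rfl⟩
/-- The quotient graph of a simple graph by an equivalence relation on its
vertices: two classes are adjacent iff they are distinct and contain adjacent
representatives. -/
def quotGraph {V : Type*} (Γ : SimpleGraph V) (s : Setoid V) : SimpleGraph (Quotient s) where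
  Adj x y := x ≠ y ∧ ∃ u v : V, Quotient.mk s u = x ∧ Quotient.mk s v = y ∧ Γ.Adj u v
  symm := ⟨fun x y ⟨h1, u, v, hu, hv, h⟩ => ⟨h1.symm, v, u, hv, hu, h.symm⟩⟩
  loopless := ⟨fun x ⟨h1, _⟩ => h1 rfl⟩

/-- The setoid on graded left ideals given by `I ∼ J ↔ I ∩ R_e = J ∩ R_e`. -/
def eKer (𝒜 : G → AddSubgroup R) [GradedRing 𝒜] : Setoid (hV 𝒜) :=
  Setoid.ker fun I : hV 𝒜 => ((I : Ideal R) : Set R) ∩ (𝒜 0 : Set R)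

/-- The set of proper nontrivial left ideals of the identity component `R_e = 𝒜 0`. -/
def V0 (𝒜 : G → AddSubgroup R) [GradedRing 𝒜] : Set (Ideal ↥(𝒜 0)) :=
  {I | I ≠ ⊥ ∧ I ≠ ⊤}

section aux
variable (𝒜 : G → AddSubgroup R) [GradedRing 𝒜]

/-- The image of an ideal of `𝒜 0` in `R`, as an additive subgroup. -/
def imAdd (Ie : Ideal ↥(𝒜 0)) : AddSubgroup R :=
  (Ie.toAddSubgroup).map (𝒜 0).subtype

lemma imAdd_coe (Ie : Ideal ↥(𝒜 0)) :
    (imAdd 𝒜 Ie : Set R) = Subtype.val '' (Ie : Set ↥(𝒜 0)) := by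
  simp [imAdd]

lemma span_inter (Ie : Ideal ↥(𝒜 0)) :
    ((Ideal.span (Subtype.val '' ((Ie : Set ↥(𝒜 0)))) : Ideal R) : Set R) ∩ (𝒜 0 : Set R)
      = Subtype.val '' ((Ie : Set ↥(𝒜 0))) := by
  apply Set.Subset.antisymm
  · rintro z ⟨hz, hz0⟩
    rw [SetLike.mem_coe, Ideal.span, Submodule.mem_span_set'] at hz
    obtain ⟨n, f, g, hsum⟩ := hz
    rw [← imAdd_coe]
    have hz' : z = (DirectSum.decompose 𝒜 z 0 : R) :=
      (DirectSum.decompose_of_mem_same 𝒜 hz0).symm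
    rw [hz', ← hsum, DirectSum.decompose_sum, DFinsupp.finset_sum_apply,
      AddSubmonoidClass.coe_finset_sum]
    refine sum_mem fun i _ => ?_
    obtain ⟨p, hp, hpe⟩ := (g i).2
    have hm : ((g i : R)) ∈ 𝒜 0 := hpe ▸ p.2
    have hdec : (DirectSum.decompose 𝒜 (f i * (g i : R)) ((0 : G) + 0) : R)
        = (DirectSum.decompose 𝒜 (f i) 0 : R) * (g i : R) :=
      DirectSum.coe_decompose_mul_add_of_right_mem 𝒜 hm
    rw [zero_add] at hdec
    rw [smul_eq_mul, hdec, ← hpe]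
    refine ⟨(⟨_, (DirectSum.decompose 𝒜 (f i) 0).2⟩ : ↥(𝒜 0)) * p,
      Ie.smul_mem _ hp, rfl⟩
  · rintro z ⟨p, hp, rfl⟩
    exact ⟨Ideal.subset_span ⟨p, hp, rfl⟩, p.2⟩

lemma exists_deg0 (hfaith : ∀ (τ : G), ∀ x ∈ 𝒜 τ, x ≠ 0 → ∃ r ∈ 𝒜 (-τ), r * x ≠ 0)
    {K : Ideal R} (hK : Ideal.IsHomogeneous 𝒜 K) (hne : K ≠ ⊥) :
    ∃ z : R, z ∈ K ∧ z ∈ 𝒜 0 ∧ z ≠ 0 := by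
  classical
  obtain ⟨z₀, hz₀, hz₀ne⟩ := K.ne_bot_iff.mp hne
  have hexists : ∃ τ, (DirectSum.decompose 𝒜 z₀ τ : R) ≠ 0 := by
    by_contra hc
    push_neg at hc
    apply hz₀ne
    rw [← DirectSum.sum_support_decompose 𝒜 z₀]
    exact Finset.sum_eq_zero fun τ _ => hc τ
  obtain ⟨τ, hτ⟩ := hexists
  obtain ⟨r, hr, hrx⟩ := hfaith τ _ (DirectSum.decompose 𝒜 z₀ τ).2 hτ
  refine ⟨r * _, K.smul_mem r (hK τ hz₀), ?_, hrx⟩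
  have h0 := SetLike.mul_mem_graded hr (DirectSum.decompose 𝒜 z₀ τ).2
  rwa [neg_add_cancel] at h0

/-- Restriction of an ideal of `R` to `𝒜 0`. -/
def res (J : Ideal R) : Ideal ↥(𝒜 0) where
  carrier := {x : ↥(𝒜 0) | (x : R) ∈ J}
  add_mem' ha hb := J.add_mem ha hb
  zero_mem' := J.zero_mem
  smul_mem' := fun c x hx => by
    have h : ((c • x : ↥(𝒜 0)) : R) = (c : R) * (x : R) := rfl
    show ((c • x : ↥(𝒜 0)) : R) ∈ J
    rw [h]
    exact J.mul_mem_left _ hx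

lemma res_image (J : Ideal R) :
    ((J : Set R) ∩ (𝒜 0 : Set R)) = Subtype.val '' ((res 𝒜 J : Set ↥(𝒜 0))) := by
  ext z
  constructor
  · rintro ⟨hz, h0⟩
    exact ⟨⟨z, h0⟩, hz, rfl⟩
  · rintro ⟨p, hp, rfl⟩
    exact ⟨hp, p.2⟩

lemma span_mem_hV {Ie : Ideal ↥(𝒜 0)} (h : Ie ∈ V0 𝒜) :
    Ideal.span (Subtype.val '' ((Ie : Set ↥(𝒜 0)))) ∈ hV 𝒜 := by
  obtain ⟨hbot, htop⟩ := h
  refine ⟨?_, ?_, ?_⟩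
  · obtain ⟨x, hx, hxne⟩ := Ie.ne_bot_iff.mp hbot
    rw [Submodule.ne_bot_iff]
    refine ⟨(x : R), Ideal.subset_span ⟨x, hx, rfl⟩, fun hc => hxne (Subtype.ext hc)⟩
  · intro hc
    apply htop
    have h1 : (1 : R) ∈ ((Ideal.span (Subtype.val '' ((Ie : Set ↥(𝒜 0)))) : Ideal R) : Set R)
        ∩ (𝒜 0 : Set R) := by
      rw [hc]; exact ⟨Submodule.mem_top, SetLike.one_mem_graded 𝒜⟩
    rw [span_inter] at h1
    obtain ⟨p, hp, hpe⟩ := h1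
    rw [Ideal.eq_top_iff_one]
    have hp1 : p = 1 := Subtype.ext hpe
    rwa [hp1] at hp
  · exact Ideal.homogeneous_span 𝒜 _ (by rintro x ⟨p, _, rfl⟩; exact ⟨0, p.2⟩)

/-- The map `V0 → hV` sending `I_e` to `R · I_e`. -/
def ΦV (Ie : V0 𝒜) : hV 𝒜 :=
  ⟨Ideal.span (Subtype.val '' (((Ie : Ideal ↥(𝒜 0)) : Set ↥(𝒜 0)))), span_mem_hV 𝒜 Ie.2⟩

/-- The map `V0 → Quotient (eKer 𝒜)`. -/
def fV (Ie : V0 𝒜) : Quotient (eKer 𝒜) := Quotient.mk (eKer 𝒜) (ΦV 𝒜 Ie)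

lemma fV_eq_iff (Ie : V0 𝒜) (J : hV 𝒜) :
    fV 𝒜 Ie = Quotient.mk (eKer 𝒜) J ↔
      ((J : Ideal R) : Set R) ∩ (𝒜 0 : Set R) =
        Subtype.val '' (((Ie : Ideal ↥(𝒜 0)) : Set ↥(𝒜 0))) := by
  constructor
  · intro h
    have h2 : (((ΦV 𝒜 Ie : Ideal R)) : Set R) ∩ (𝒜 0 : Set R)
        = ((J : Ideal R) : Set R) ∩ (𝒜 0 : Set R) := Quotient.exact h
    rw [← h2]
    exact span_inter 𝒜 _
  · intro h
    apply Quotient.sound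
    show (((ΦV 𝒜 Ie : Ideal R)) : Set R) ∩ (𝒜 0 : Set R)
        = ((J : Ideal R) : Set R) ∩ (𝒜 0 : Set R)
    rw [h]
    exact span_inter 𝒜 _

lemma fV_inj : Function.Injective (fV 𝒜) := by
  intro Ie Je h
  have h1 := (fV_eq_iff 𝒜 Ie (ΦV 𝒜 Je)).mp (by rw [h]; rfl)
  have h2 : Subtype.val '' (((Je : Ideal ↥(𝒜 0)) : Set ↥(𝒜 0)))
      = Subtype.val '' (((Ie : Ideal ↥(𝒜 0)) : Set ↥(𝒜 0))) := by
    rw [← span_inter 𝒜 (Je : Ideal ↥(𝒜 0))]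
    exact h1
  have h3 := Set.image_injective.mpr Subtype.val_injective h2
  exact (Subtype.ext (SetLike.coe_injective h3)).symm

lemma fV_surj (hfaith : ∀ (τ : G), ∀ x ∈ 𝒜 τ, x ≠ 0 → ∃ r ∈ 𝒜 (-τ), r * x ≠ 0) :
    Function.Surjective (fV 𝒜) := by
  intro q
  induction q using Quotient.ind with
  | _ J =>
    have hres : res 𝒜 (J : Ideal R) ∈ V0 𝒜 := by
      constructor
      · obtain ⟨z, hzJ, hz0, hzne⟩ := exists_deg0 𝒜 hfaith J.2.2.2 J.2.1
        rw [Submodule.ne_bot_iff]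
        exact ⟨⟨z, hz0⟩, hzJ, fun hc => hzne (congrArg Subtype.val hc)⟩
      · intro hc
        apply J.2.2.1
        rw [Ideal.eq_top_iff_one]
        have h1 : (1 : ↥(𝒜 0)) ∈ res 𝒜 (J : Ideal R) := hc ▸ Submodule.mem_top
        exact h1
    exact ⟨⟨res 𝒜 (J : Ideal R), hres⟩, (fV_eq_iff 𝒜 _ J).mpr (res_image 𝒜 (J : Ideal R))⟩

end aux

/-- For a left `e`-faithful grading, `I ∼ J ↔ I ∩ R_e = J ∩ R_e` is an
equivalence relation on the vertices of `Gr_G(R)`, and the quotient graph of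
`Gr_G(R)` by `∼` is isomorphic to the intersection graph `G(R_e)` of left ideals of
`R_e`, via the map sending `I_e` to the class of `R·I_e` (characterized by: the class
of `φ I_e` consists exactly of the graded ideals `J` with `J ∩ R_e = I_e`). -/
theorem stmt12 (𝒜 : G → AddSubgroup R) [GradedRing 𝒜]
    (hfaith : ∀ (τ : G), ∀ x ∈ 𝒜 τ, x ≠ 0 → ∃ r ∈ 𝒜 (-τ), r * x ≠ 0) :
    (Equivalence fun I J : hV 𝒜 =>
        ((I : Ideal R) : Set R) ∩ (𝒜 0 : Set R) = ((J : Ideal R) : Set R) ∩ (𝒜 0 : Set R)) ∧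
    ∃ φ : interGraph (V0 𝒜) ≃g quotGraph (interGraph (hV 𝒜)) (eKer 𝒜),
      ∀ (Ie : V0 𝒜) (J : hV 𝒜),
        φ Ie = Quotient.mk (eKer 𝒜) J ↔
          ((J : Ideal R) : Set R) ∩ (𝒜 0 : Set R) =
            Subtype.val '' (((Ie : Ideal ↥(𝒜 0)) : Set ↥(𝒜 0))) := by
  refine ⟨⟨fun _ => rfl, Eq.symm, Eq.trans⟩, ?_⟩
  have hbij : Function.Bijective (fV 𝒜) := ⟨fV_inj 𝒜, fV_surj 𝒜 hfaith⟩
  -- intersection transfer lemmas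
  have hint : ∀ (Ie Je : V0 𝒜) (u v : hV 𝒜),
      ((u : Ideal R) : Set R) ∩ (𝒜 0 : Set R)
        = Subtype.val '' (((Ie : Ideal ↥(𝒜 0)) : Set ↥(𝒜 0))) →
      ((v : Ideal R) : Set R) ∩ (𝒜 0 : Set R)
        = Subtype.val '' (((Je : Ideal ↥(𝒜 0)) : Set ↥(𝒜 0))) →
      (u : Ideal R) ⊓ (v : Ideal R) ≠ ⊥ →
      (Ie : Ideal ↥(𝒜 0)) ⊓ (Je : Ideal ↥(𝒜 0)) ≠ ⊥ := by
    intro Ie Je u v hu hv hne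
    obtain ⟨z, hz, hz0, hzne⟩ :=
      exists_deg0 𝒜 hfaith (Ideal.IsHomogeneous.inf u.2.2.2 v.2.2.2) hne
    have hzu : z ∈ ((u : Ideal R) : Set R) ∩ (𝒜 0 : Set R) :=
      ⟨(Submodule.mem_inf.mp hz).1, hz0⟩
    have hzv : z ∈ ((v : Ideal R) : Set R) ∩ (𝒜 0 : Set R) :=
      ⟨(Submodule.mem_inf.mp hz).2, hz0⟩
    rw [hu] at hzu
    rw [hv] at hzv
    obtain ⟨p, hp, hpe⟩ := hzu
    obtain ⟨q, hq, hqe⟩ := hzv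
    have hpq : q = p := Subtype.ext (hqe.trans hpe.symm)
    rw [Submodule.ne_bot_iff]
    refine ⟨p, Submodule.mem_inf.mpr ⟨hp, hpq ▸ hq⟩, fun hc => hzne ?_⟩
    rw [← hpe, hc]; rfl
  have hint2 : ∀ (Ie Je : V0 𝒜),
      (Ie : Ideal ↥(𝒜 0)) ⊓ (Je : Ideal ↥(𝒜 0)) ≠ ⊥ →
      ((ΦV 𝒜 Ie : Ideal R)) ⊓ ((ΦV 𝒜 Je : Ideal R)) ≠ ⊥ := by
    intro Ie Je h
    obtain ⟨x, hx, hxne⟩ := Submodule.ne_bot_iff _ |>.mp h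
    rw [Submodule.ne_bot_iff]
    refine ⟨(x : R), Submodule.mem_inf.mpr
      ⟨Ideal.subset_span ⟨x, (Submodule.mem_inf.mp hx).1, rfl⟩,
       Ideal.subset_span ⟨x, (Submodule.mem_inf.mp hx).2, rfl⟩⟩,
      fun hc => hxne (Subtype.ext hc)⟩
  refine ⟨⟨Equiv.ofBijective (fV 𝒜) hbij, ?_⟩, ?_⟩
  · intro Ie Je
    show (quotGraph (interGraph (hV 𝒜)) (eKer 𝒜)).Adj (fV 𝒜 Ie) (fV 𝒜 Je) ↔
      (interGraph (V0 𝒜)).Adj Ie Je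
    constructor
    · rintro ⟨hne, u, v, hu, hv, huv, hcap⟩
      have hIu : ((u : Ideal R) : Set R) ∩ (𝒜 0 : Set R)
          = Subtype.val '' (((Ie : Ideal ↥(𝒜 0)) : Set ↥(𝒜 0))) := by
        have h2 : (((ΦV 𝒜 Ie : Ideal R)) : Set R) ∩ (𝒜 0 : Set R)
            = ((u : Ideal R) : Set R) ∩ (𝒜 0 : Set R) := (Quotient.exact hu).symm
        rw [← h2]; exact span_inter 𝒜 _
      have hJv : ((v : Ideal R) : Set R) ∩ (𝒜 0 : Set R)
          = Subtype.val '' (((Je : Ideal ↥(𝒜 0)) : Set ↥(𝒜 0))) := by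
        have h2 : (((ΦV 𝒜 Je : Ideal R)) : Set R) ∩ (𝒜 0 : Set R)
            = ((v : Ideal R) : Set R) ∩ (𝒜 0 : Set R) := (Quotient.exact hv).symm
        rw [← h2]; exact span_inter 𝒜 _
      exact ⟨fun h => hne (by rw [h]), hint Ie Je u v hIu hJv hcap⟩
    · rintro ⟨hne, hcap⟩
      have hfne : fV 𝒜 Ie ≠ fV 𝒜 Je := fun h => hne (fV_inj 𝒜 h)
      exact ⟨hfne, ΦV 𝒜 Ie, ΦV 𝒜 Je, rfl, rfl,
        fun h => hfne (congrArg (Quotient.mk (eKer 𝒜)) h), hint2 Ie Je hcap⟩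
  · intro Ie J
    exact fV_eq_iff 𝒜 Ie J
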